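/- For every integer d ≥ 3, the value k = 1 is frequency restrictive for d: there exists a vector of positive real numbers f(1), …, f(d) with f(1) + ⋯ + f(d) = 1 such that no 1-balanced sequence over the alphabet {1, …, d} has frequency vector (f(1), …, f(d)). Consequently BT(d) ≥ 2 for all d ≥ 3. -/

import Mathlib

open Finset Filter Topology

/-- Number of occurrences of the letter `c` in the factor of `u` of length `n`
starting at position `i`, i.e. `#{t : i ≤ t < i+n, u t = c}`. -/
def cnt {A : Type*} [DecidableEq A] (u : ℕ → A) (c : A) (i n : ℕ) : ℕ :=
  ((Finset.Ico i (i + n)).filter (fun t => u t = c)).card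

/-- A sequence `u` is `k`-balanced if the numbers of occurrences of any letter in
any two factors of the same length differ by at most `k`. -/
def IsBalanced {A : Type*} [DecidableEq A] (k : ℕ) (u : ℕ → A) : Prop :=
  ∀ i j n : ℕ, ∀ c : A, ((cnt u c i n : ℤ) - (cnt u c j n : ℤ)).natAbs ≤ k

/-- The letter `c` has frequency `f` in the sequence `u`. -/
def HasFreq {A : Type*} [DecidableEq A] (u : ℕ → A) (c : A) (f : ℝ) : Prop :=
  Tendsto (fun n : ℕ => (cnt u c 0 n : ℝ) / n) atTop (𝓝 f)

section Aux

variable {A : Type*} [DecidableEq A]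

lemma cnt_add (u : ℕ → A) (c : A) (i a b : ℕ) :
    cnt u c i (a + b) = cnt u c i a + cnt u c (i + a) b := by
  have h : Finset.Ico i (i + (a + b)) = Finset.Ico i (i + a) ∪ Finset.Ico (i + a) (i + a + b) := by
    rw [Finset.Ico_union_Ico_eq_Ico (by omega) (by omega)]
    congr 1
    omega
  unfold cnt
  rw [h, Finset.filter_union, Finset.card_union_of_disjoint]
  exact Finset.disjoint_filter_filter (Finset.Ico_disjoint_Ico_consecutive i (i + a) (i + a + b))

lemma cnt_le_len (u : ℕ → A) (c : A) (i n : ℕ) : cnt u c i n ≤ n := by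
  calc cnt u c i n ≤ (Finset.Ico i (i + n)).card := Finset.card_filter_le _ _
  _ = n := by rw [Nat.card_Ico]; omega

lemma cnt_mono (u : ℕ → A) (c : A) (i : ℕ) {n m : ℕ} (h : n ≤ m) :
    cnt u c i n ≤ cnt u c i m := by
  obtain ⟨k, rfl⟩ : ∃ k, m = n + k := ⟨m - n, by omega⟩
  rw [cnt_add]
  omega

lemma cnt_one (u : ℕ → A) (c : A) (i : ℕ) :
    cnt u c i 1 = if u i = c then 1 else 0 := by
  unfold cnt
  have : Finset.Ico i (i + 1) = {i} := by
    ext t; simp [Finset.mem_Ico]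
  rw [this, Finset.filter_singleton]
  split <;> simp

lemma balance_nat {v : ℕ → A} (hb : IsBalanced 1 v) (i j n : ℕ) (c : A) :
    cnt v c i n ≤ cnt v c j n + 1 := by
  have := hb i j n c
  omega

end Aux

lemma cnt_near {A : Type*} [DecidableEq A] {v : ℕ → A} {c : A} {f : ℝ}
    (hb : IsBalanced 1 v) (hf : HasFreq v c f) (i n : ℕ) (hn : 0 < n) :
    |(cnt v c i n : ℝ) - n * f| ≤ 1 := by
  set C := cnt v c i n with hC
  have hkey : ∀ m : ℕ, cnt v c i (m * n) ≤ m * C + m ∧ m * C ≤ cnt v c i (m * n) + m := by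
    intro m
    induction m with
    | zero => simp [cnt]
    | succ m ih =>
      have hadd : cnt v c i ((m + 1) * n) = cnt v c i (m * n) + cnt v c (i + m * n) n := by
        rw [Nat.succ_mul, cnt_add]
      have h1 := balance_nat hb (i + m * n) i n c
      have h2 := balance_nat hb i (i + m * n) n c
      rw [hadd, Nat.succ_mul m C]
      constructor <;> linarith [ih.1, ih.2]
  -- limit of the subsequence
  have hmono : Tendsto (fun m : ℕ => i + m * n) atTop atTop := by
    apply tendsto_atTop_mono (fun m => ?_) tendsto_id
    calc (id m : ℕ) = m * 1 := (mul_one m).symm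
    _ ≤ m * n := Nat.mul_le_mul_left m hn
    _ ≤ i + m * n := Nat.le_add_left _ _
  have hcomp : Tendsto (fun m : ℕ => (cnt v c 0 (i + m * n) : ℝ) / ((i + m * n : ℕ) : ℝ))
      atTop (𝓝 f) := hf.comp hmono
  have hone : Tendsto (fun m : ℕ => (1 : ℝ) / m) atTop (𝓝 0) :=
    tendsto_one_div_atTop_nhds_zero_nat
  have hB : Tendsto (fun m : ℕ => (((i : ℝ) + m * n)) / (m * n)) atTop (𝓝 1) := by
    have lim : Tendsto (fun m : ℕ => ((i : ℝ) / n) * (1 / m) + 1) atTop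
        (𝓝 (((i : ℝ) / n) * 0 + 1)) := (hone.const_mul _).add tendsto_const_nhds
    simp only [mul_zero, zero_add] at lim
    apply Tendsto.congr' _ lim
    filter_upwards [eventually_ge_atTop 1] with m hm
    have hm' : (m : ℝ) ≠ 0 := by positivity
    have hn' : (n : ℝ) ≠ 0 := by positivity
    field_simp
  have hsplit : ∀ m : ℕ, (cnt v c 0 (i + m * n) : ℝ) = cnt v c 0 i + cnt v c i (m * n) := by
    intro m
    have h := cnt_add v c 0 i (m * n)
    simp only [zero_add] at h
    exact_mod_cast congrArg (fun x : ℕ => (x : ℝ)) h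
  have hglim : Tendsto (fun m : ℕ => (cnt v c i (m * n) : ℝ) / ((m : ℝ) * n)) atTop (𝓝 f) := by
    have lim : Tendsto (fun m : ℕ =>
        (cnt v c 0 (i + m * n) : ℝ) / ((i + m * n : ℕ) : ℝ) * (((i : ℝ) + m * n) / (m * n))
          - (cnt v c 0 i : ℝ) * ((1 / (n : ℝ)) * (1 / m))) atTop
        (𝓝 (f * 1 - (cnt v c 0 i : ℝ) * ((1 / (n : ℝ)) * 0))) :=
      (hcomp.mul hB).sub (tendsto_const_nhds.mul ((hone.const_mul _)))
    simp only [mul_one, mul_zero, sub_zero] at lim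
    apply Tendsto.congr' _ lim
    filter_upwards [eventually_ge_atTop 1] with m hm
    have hm0 : 0 < m := hm
    have hm' : (m : ℝ) ≠ 0 := by positivity
    have hn' : (n : ℝ) ≠ 0 := by positivity
    have hi : ((i + m * n : ℕ) : ℝ) ≠ 0 := by
      have : 0 < i + m * n := by positivity
      exact_mod_cast this.ne'
    rw [hsplit m]
    push_cast at hi ⊢
    field_simp
    ring
  have hbound : ∀ᶠ m : ℕ in atTop,
      |(cnt v c i (m * n) : ℝ) / ((m : ℝ) * n) - (C : ℝ) / n| ≤ 1 / n := by
    filter_upwards [eventually_ge_atTop 1] with m hm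
    have hm0 : 0 < m := hm
    have hm' : (0 : ℝ) < m := by exact_mod_cast hm0
    have hn' : (0 : ℝ) < n := by exact_mod_cast hn
    have h := hkey m
    have heq : (cnt v c i (m * n) : ℝ) / ((m : ℝ) * n) - (C : ℝ) / n
        = ((cnt v c i (m * n) : ℝ) - m * C) / ((m : ℝ) * n) := by
      field_simp
    have h1 : (cnt v c i (m * n) : ℝ) ≤ m * C + m := by exact_mod_cast h.1
    have h2 : (m : ℝ) * C ≤ cnt v c i (m * n) + m := by exact_mod_cast h.2
    have habs2 : |(cnt v c i (m * n) : ℝ) - m * C| ≤ m :=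
      abs_le.mpr ⟨by linarith, by linarith⟩
    rw [heq, abs_div, abs_of_pos (by positivity : (0 : ℝ) < (m : ℝ) * n)]
    rw [div_le_div_iff₀ (by positivity) hn']
    nlinarith [abs_nonneg ((cnt v c i (m * n) : ℝ) - m * C)]
  have habs : Tendsto (fun m : ℕ => |(cnt v c i (m * n) : ℝ) / ((m : ℝ) * n) - (C : ℝ) / n|)
      atTop (𝓝 |f - (C : ℝ) / n|) := (hglim.sub tendsto_const_nhds).abs
  have hfin : |f - (C : ℝ) / n| ≤ 1 / n := le_of_tendsto habs hbound
  have hn' : (0 : ℝ) < n := by exact_mod_cast hn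
  have heq : (C : ℝ) - n * f = -((n : ℝ) * (f - (C : ℝ) / n)) := by
    field_simp
    ring
  rw [heq, abs_neg, abs_mul, abs_of_pos hn']
  calc (n : ℝ) * |f - (C : ℝ) / n| ≤ (n : ℝ) * (1 / n) :=
        mul_le_mul_of_nonneg_left hfin (le_of_lt hn')
  _ = 1 := by field_simp

lemma cnt_near_nat {A : Type*} [DecidableEq A] {v : ℕ → A} {c : A} {q : ℕ}
    (hq : 0 < q) (hb : IsBalanced 1 v) (hf : HasFreq v c (1 / (q : ℝ))) (i n : ℕ) :
    q * cnt v c i n ≤ n + q ∧ n ≤ q * cnt v c i n + q := by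
  rcases Nat.eq_zero_or_pos n with rfl | hn
  · simp [cnt]
  have h := abs_le.mp (cnt_near hb hf i n hn)
  have hq' : (0 : ℝ) < q := by exact_mod_cast hq
  have key : (n : ℝ) * (1 / (q : ℝ)) * q = n := by field_simp
  constructor
  · have hr : ((q * cnt v c i n : ℕ) : ℝ) ≤ ((n + q : ℕ) : ℝ) := by
      push_cast
      nlinarith [h.2]
    exact_mod_cast hr
  · have hr : ((n : ℕ) : ℝ) ≤ ((q * cnt v c i n + q : ℕ) : ℝ) := by
      push_cast
      nlinarith [h.1]
    exact_mod_cast hr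

lemma cnt_blocks_le {A : Type*} [DecidableEq A] {v : ℕ → A} {c : A} {q : ℕ} (hq : 0 < q)
    (h1 : ∀ m, cnt v c m q ≤ 1) : ∀ L m, q * cnt v c m L + 1 ≤ L + q := by
  intro L
  induction L using Nat.strong_induction_on with
  | _ L ih =>
    intro m
    rcases lt_or_ge L q with h | h
    · have hle : cnt v c m L ≤ 1 := le_trans (cnt_mono v c m (le_of_lt h)) (h1 m)
      have hL : cnt v c m L ≤ L := cnt_le_len v c m L
      have : cnt v c m L = 0 ∨ cnt v c m L = 1 := by omega
      rcases this with h0 | h0 <;> rw [h0] <;> omega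
    · obtain ⟨L', rfl⟩ : ∃ L', L = L' + q := ⟨L - q, by omega⟩
      have e := cnt_add v c m L' q
      have h2 := h1 (m + L')
      have h3 := ih L' (by omega) m
      have hmul : q * cnt v c (m + L') q ≤ q * 1 := Nat.mul_le_mul_left q h2
      rw [e, Nat.mul_add]
      omega

lemma cnt_blocks_ge {A : Type*} [DecidableEq A] {v : ℕ → A} {c : A} {q : ℕ} (hq : 0 < q)
    (h1 : ∀ m, 1 ≤ cnt v c m q) : ∀ L m, L + 1 ≤ q * cnt v c m L + q := by
  intro L
  induction L using Nat.strong_induction_on with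
  | _ L ih =>
    intro m
    rcases lt_or_ge L q with h | h
    · omega
    · obtain ⟨L', rfl⟩ : ∃ L', L = L' + q := ⟨L - q, by omega⟩
      have e := cnt_add v c m L' q
      have h2 := h1 (m + L')
      have h3 := ih L' (by omega) m
      have hmul : q * 1 ≤ q * cnt v c (m + L') q := Nat.mul_le_mul_left q h2
      rw [e, Nat.mul_add]
      omega

lemma no_two_zeros {A : Type*} [DecidableEq A] {v : ℕ → A} {c : A} {q : ℕ}
    (hq : 0 < q) (hb : IsBalanced 1 v) (hf : HasFreq v c (1 / (q : ℝ)))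
    {a b : ℕ} (hz : cnt v c a q = 0) (hz' : cnt v c b q = 0) (hle : a + q ≤ b) : False := by
  set L := b - a - q with hL
  have h1 : ∀ m, cnt v c m q ≤ 1 := fun m => by
    have := balance_nat hb m a q c; omega
  have hz2 : cnt v c (a + q + L) q = 0 := by rwa [show a + q + L = b by omega]
  have e : cnt v c a (q + (L + q)) = cnt v c a q + (cnt v c (a + q) L + cnt v c (a + q + L) q) := by
    rw [cnt_add, cnt_add]
  rw [hz, hz2] at e
  simp only [Nat.zero_add, Nat.add_zero] at e
  have hlow := (cnt_near_nat hq hb hf a (q + (L + q))).2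
  rw [e] at hlow
  have hup := cnt_blocks_le hq h1 L (a + q)
  omega

lemma no_two_twos {A : Type*} [DecidableEq A] {v : ℕ → A} {c : A} {q : ℕ}
    (hq : 0 < q) (hb : IsBalanced 1 v) (hf : HasFreq v c (1 / (q : ℝ)))
    {a b : ℕ} (hz : 2 ≤ cnt v c a q) (hz' : 2 ≤ cnt v c b q) (hle : a + q ≤ b) : False := by
  set L := b - a - q with hL
  have h1 : ∀ m, 1 ≤ cnt v c m q := fun m => by
    have := balance_nat hb a m q c; omega
  have hz2 : 2 ≤ cnt v c (a + q + L) q := by rwa [show a + q + L = b by omega]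
  have e : cnt v c a (q + (L + q)) = cnt v c a q + (cnt v c (a + q) L + cnt v c (a + q + L) q) := by
    rw [cnt_add, cnt_add]
  have hup := (cnt_near_nat hq hb hf a (q + (L + q))).1
  rw [e, Nat.mul_add, Nat.mul_add] at hup
  have hlow := cnt_blocks_ge hq h1 L (a + q)
  have m1 : q * 2 ≤ q * cnt v c a q := Nat.mul_le_mul_left q hz
  have m2 : q * 2 ≤ q * cnt v c (a + q + L) q := Nat.mul_le_mul_left q hz2
  omega

lemma eventually_one {A : Type*} [DecidableEq A] {v : ℕ → A} {c : A} {q : ℕ}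
    (hq : 0 < q) (hb : IsBalanced 1 v) (hf : HasFreq v c (1 / (q : ℝ))) :
    ∃ N, ∀ n, N ≤ n → cnt v c n q = 1 := by
  by_cases hz : ∃ m, cnt v c m q = 0
  · obtain ⟨m0, hm0⟩ := hz
    refine ⟨m0 + q, fun n hn => ?_⟩
    have hle : cnt v c n q ≤ 1 := by have := balance_nat hb n m0 q c; omega
    rcases Nat.eq_zero_or_pos (cnt v c n q) with h | h
    · exact (no_two_zeros hq hb hf hm0 h (by omega)).elim
    · omega
  · push_neg at hz
    by_cases h2 : ∃ m, 2 ≤ cnt v c m q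
    · obtain ⟨m0, hm0⟩ := h2
      refine ⟨m0 + q, fun n hn => ?_⟩
      have h1 : 1 ≤ cnt v c n q := Nat.pos_of_ne_zero (hz n)
      rcases lt_or_ge (cnt v c n q) 2 with h | h
      · omega
      · exact (no_two_twos hq hb hf hm0 h (by omega)).elim
    · push_neg at h2
      exact ⟨0, fun n _ => by have := hz n; have := h2 n; omega⟩

lemma periodic_of_one {A : Type*} [DecidableEq A] {v : ℕ → A} {c : A} {q N : ℕ}
    (hone : ∀ n, N ≤ n → cnt v c n q = 1) :
    ∀ n, N ≤ n → (v (n + q) = c ↔ v n = c) := by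
  intro n hn
  have e1 : cnt v c n (q + 1) = 1 + cnt v c (n + q) 1 := by
    rw [cnt_add, hone n hn]
  have e2 : cnt v c n (1 + q) = cnt v c n 1 + 1 := by
    rw [cnt_add, hone (n + 1) (by omega)]
  rw [show q + 1 = 1 + q by omega, e2] at e1
  have h := e1
  rw [cnt_one, cnt_one] at h
  by_cases h1 : v (n + q) = c <;> by_cases h2 : v n = c <;>
    simp [h1, h2] at h ⊢

lemma eq_of_mod_window {q a b N : ℕ} (hq : 0 < q) (ha1 : N ≤ a) (ha2 : a < N + q)
    (hb1 : N ≤ b) (hb2 : b < N + q) (h : a % q = b % q) : a = b := by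
  rcases le_total a b with hab | hab
  · have hd : q ∣ b - a := (Nat.modEq_iff_dvd' hab).mp h
    rcases Nat.eq_zero_or_pos (b - a) with h0 | h0
    · omega
    · have := Nat.le_of_dvd h0 hd; omega
  · have hd : q ∣ a - b := (Nat.modEq_iff_dvd' hab).mp h.symm
    rcases Nat.eq_zero_or_pos (a - b) with h0 | h0
    · omega
    · have := Nat.le_of_dvd h0 hd; omega

lemma residue {A : Type*} [DecidableEq A] {v : ℕ → A} {c : A} {q : ℕ} (hq : 0 < q)
    (hb : IsBalanced 1 v) (hf : HasFreq v c (1 / (q : ℝ))) :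
    ∃ N t, ∀ n, N ≤ n → (v n = c ↔ n % q = t % q) := by
  obtain ⟨N, hone⟩ := eventually_one hq hb hf
  have hcard : ((Finset.Ico N (N + q)).filter (fun s => v s = c)).card = 1 := hone N le_rfl
  obtain ⟨t, ht⟩ := Finset.card_eq_one.mp hcard
  have htm : t ∈ Finset.Ico N (N + q) ∧ v t = c := by
    have hmem : t ∈ (Finset.Ico N (N + q)).filter (fun s => v s = c) := by
      rw [ht]; exact Finset.mem_singleton_self t
    simpa [Finset.mem_filter] using hmem
  rw [Finset.mem_Ico] at htm
  have huniq : ∀ s, N ≤ s → s < N + q → (v s = c ↔ s = t) := by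
    intro s h1 h2
    constructor
    · intro h
      have hmem : s ∈ (Finset.Ico N (N + q)).filter (fun u => v u = c) := by
        simp [Finset.mem_filter, Finset.mem_Ico, h1, h2, h]
      rw [ht] at hmem
      simpa using hmem
    · rintro rfl; exact htm.2
  have hper : ∀ k s, N ≤ s → s < N + q → (v (s + k * q) = c ↔ s = t) := by
    intro k
    induction k with
    | zero => intro s h1 h2; simpa using huniq s h1 h2
    | succ k ih =>
      intro s h1 h2
      rw [show s + (k + 1) * q = (s + k * q) + q by ring]
      rw [periodic_of_one hone (s + k * q) (by omega)]
      exact ih s h1 h2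
  refine ⟨N, t, fun n hn => ?_⟩
  set s := N + (n - N) % q with hs
  have hsk : n = s + ((n - N) / q) * q := by
    have hdm := Nat.div_add_mod (n - N) q
    have hcomm : ((n - N) / q) * q = q * ((n - N) / q) := Nat.mul_comm _ _
    omega
  have h1 : N ≤ s := by omega
  have h2 : s < N + q := by have := Nat.mod_lt (n - N) hq; omega
  have hiff : v n = c ↔ s = t := by
    rw [hsk]; exact hper _ s h1 h2
  rw [hiff]
  have hsm : s % q = n % q := by
    conv_rhs => rw [hsk]
    rw [Nat.add_mul_mod_self_right]
  constructor
  · rintro rfl; exact hsm.symm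
  · intro h
    exact eq_of_mod_window hq h1 h2 htm.1.1 htm.1.2 (hsm.trans h)


/-- For every `d ≥ 3`, the value `k = 1` is frequency restrictive: there is a
positive vector `f` summing to `1` which is not the frequency vector of any
`1`-balanced sequence over a `d`-letter alphabet. Consequently `BT(d) ≥ 2`. -/
theorem one_is_frequency_restrictive (d : ℕ) (hd : 3 ≤ d) :
    ∃ f : Fin d → ℝ, (∀ i, 0 < f i) ∧ ∑ i, f i = 1 ∧
      ¬ ∃ v : ℕ → Fin d, IsBalanced 1 v ∧ ∀ i, HasFreq v i (f i) := by
  obtain ⟨e, rfl⟩ : ∃ e, d = e + 3 := ⟨d - 3, by omega⟩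
  refine ⟨fun i => if (i : ℕ) = 0 then 1/2 else if (i : ℕ) = 1 then 1/3
      else 1/(6*((e : ℝ)+1)), ?_, ?_, ?_⟩
  · intro i
    dsimp only
    split_ifs <;> positivity
  · rw [Fin.sum_univ_succ, Fin.sum_univ_succ]
    simp only [Fin.val_zero, Fin.val_succ, Fin.val_zero]
    norm_num
    have he : ((e : ℝ) + 1) ≠ 0 := by positivity
    field_simp
    ring
  · rintro ⟨v, hbal, hfreq⟩
    have h0 : HasFreq v 0 (1 / ((2:ℕ) : ℝ)) := by
      have := hfreq 0
      norm_num at this ⊢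
      convert this using 2
    have h1 : HasFreq v 1 (1 / ((3:ℕ) : ℝ)) := by
      have := hfreq 1
      norm_num at this ⊢
      convert this using 2
    obtain ⟨N2, t2, ht2⟩ := residue (by norm_num : (0:ℕ) < 2) hbal h0
    obtain ⟨N3, t3, ht3⟩ := residue (by norm_num : (0:ℕ) < 3) hbal h1
    set n := 6 * (N2 + N3) + (3 * (t2 % 2) + 4 * (t3 % 3)) with hn
    have e2 : n % 2 = t2 % 2 := by omega
    have e3 : n % 3 = t3 % 3 := by omega
    have hv2 : v n = 0 := (ht2 n (by omega)).mpr e2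
    have hv3 : v n = 1 := (ht3 n (by omega)).mpr e3
    rw [hv2] at hv3
    have : ((0 : Fin (e + 3)) : ℕ) = ((1 : Fin (e + 3)) : ℕ) := by rw [hv3]
    simp [Fin.val_zero, Fin.val_one] at this
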